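/- Kawasaki reflection form for a single vertex: if α₁ − α₂ + α₃ − ⋯ − α_{2n} = 0 and the crease lines l₁,…,l_{2n} through the origin make angles θᵢ = α₁ + ⋯ + α_{i-1} with l₁ (θ₁ = 0), then the composition of reflections R(l₁)∘R(l₂)∘⋯∘R(l_{2n}) is the identity on ℝ², where R(l) is reflection across the line l through the origin at the given angle. -/

import Mathlib

open Real

noncomputable def KRot (x : ℝ) : Matrix (Fin 2) (Fin 2) ℝ :=
  !![Real.cos x, -Real.sin x; Real.sin x, Real.cos x]

lemma KRot_zero : KRot 0 = 1 := by
  ext i j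
  fin_cases i <;> fin_cases j <;> simp [KRot]

lemma Krefl_mul_refl (a b : ℝ) :
    !![Real.cos (2*a), Real.sin (2*a); Real.sin (2*a), -Real.cos (2*a)] *
    !![Real.cos (2*b), Real.sin (2*b); Real.sin (2*b), -Real.cos (2*b)]
    = KRot (2*a - 2*b) := by
  ext i j
  fin_cases i <;> fin_cases j <;>
    simp [KRot, Matrix.mul_apply, Fin.sum_univ_two, Real.cos_sub, Real.sin_sub] <;> ring

lemma KRot_mul (x y : ℝ) : KRot x * KRot y = KRot (x + y) := by
  ext i j
  fin_cases i <;> fin_cases j <;>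
    simp [KRot, Matrix.mul_apply, Fin.sum_univ_two, Real.cos_add, Real.sin_add] <;> ring

lemma KRot_neg_two_pi : KRot (-(2 * π)) = 1 := by
  ext i j
  fin_cases i <;> fin_cases j <;>
    simp [KRot, Real.cos_two_pi, Real.sin_two_pi]

lemma Ksum_pairs (f : ℕ → ℝ) (n : ℕ) :
    ∑ i ∈ Finset.range (2 * n), f i
      = ∑ k ∈ Finset.range n, (f (2 * k) + f (2 * k + 1)) := by
  induction n with
  | zero => simp
  | succ m ih =>
    have h2 : 2 * (m + 1) = 2 * m + 1 + 1 := by ring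
    rw [h2, Finset.sum_range_succ, Finset.sum_range_succ, Finset.sum_range_succ, ih]
    ring

/-- Kawasaki's theorem in reflection form (sufficiency direction): if the
consecutive angles `α 0, …, α (2n-1)` of a single vertex (summing to the full
angle `2π`) satisfy the alternating-sum condition, and `θ i` is the angle of
crease line `lᵢ₊₁` (so `θ 0 = 0`, `θ i = α 0 + ⋯ + α (i-1)`), then the
composition of the reflections across the crease lines, in order, is the
identity. -/
theorem kawasaki_reflection (n : ℕ) (hn : 1 ≤ n) (α : ℕ → ℝ)
    (hα : ∀ i < 2 * n, 0 < α i)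
    (htot : ∑ i ∈ Finset.range (2 * n), α i = 2 * π)
    (hkaw : ∑ i ∈ Finset.range (2 * n), (-1 : ℝ) ^ i * α i = 0)
    (θ : ℕ → ℝ) (hθ : ∀ i, θ i = ∑ k ∈ Finset.range i, α k)
    (R : ℝ → Matrix (Fin 2) (Fin 2) ℝ)
    (hR : ∀ t, R t = !![Real.cos (2 * t), Real.sin (2 * t);
                        Real.sin (2 * t), -Real.cos (2 * t)]) :
    ((List.range (2 * n)).map (fun i => R (θ i))).prod = 1 := by
  have key : ∀ m, ((List.range (2 * m)).map (fun i => R (θ i))).prod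
      = KRot (-2 * ∑ k ∈ Finset.range m, α (2 * k)) := by
    intro m
    induction m with
    | zero => simpa using KRot_zero.symm
    | succ m ih =>
      have h2 : 2 * (m + 1) = 2 * m + 1 + 1 := by ring
      rw [h2, List.range_succ, List.range_succ, List.map_append, List.map_append,
        List.prod_append, List.prod_append]
      simp only [List.map_cons, List.map_nil, List.prod_cons, List.prod_nil, mul_one]
      rw [ih, hR, hR, mul_assoc, Krefl_mul_refl, KRot_mul]
      have hdiff : θ (2 * m + 1) = θ (2 * m) + α (2 * m) := by
        rw [hθ, hθ, Finset.sum_range_succ]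
      rw [Finset.sum_range_succ, hdiff]
      apply congrArg
      ring
  have h1 : ∑ k ∈ Finset.range n, (α (2 * k) + α (2 * k + 1)) = 2 * π := by
    rw [← Ksum_pairs]; exact htot
  have h2 : ∑ k ∈ Finset.range n, (α (2 * k) - α (2 * k + 1)) = 0 := by
    have := Ksum_pairs (fun i => (-1 : ℝ) ^ i * α i) n
    rw [hkaw] at this
    rw [← this.symm]
    apply Finset.sum_congr rfl
    intro k _
    have : ((-1 : ℝ)) ^ (2 * k) = 1 := by
      rw [pow_mul]; norm_num
    rw [pow_succ, this]
    ring
  have hsum : ∑ k ∈ Finset.range n, α (2 * k) = π := by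
    have ha : ∑ k ∈ Finset.range n, (α (2 * k) + α (2 * k + 1))
        = (∑ k ∈ Finset.range n, α (2 * k)) + ∑ k ∈ Finset.range n, α (2 * k + 1) :=
      Finset.sum_add_distrib
    have hb : ∑ k ∈ Finset.range n, (α (2 * k) - α (2 * k + 1))
        = (∑ k ∈ Finset.range n, α (2 * k)) - ∑ k ∈ Finset.range n, α (2 * k + 1) :=
      Finset.sum_sub_distrib _ _
    rw [ha] at h1; rw [hb] at h2
    linarith
  rw [key n, hsum]
  have : (-2 : ℝ) * π = -(2 * π) := by ring
  rw [this, KRot_neg_two_pi]
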